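/- Let R be a UFD and I an ideal with R/I ≅ ℤ/4ℤ via f. If a ∈ R has prime factorization a = p₁⋯p_k q₁⋯q_l r₁⋯r_m s₁⋯s_n with p_i ≡ f⁻¹(1), q_i ≡ f⁻¹(2), r_i ≡ f⁻¹(3), s_i ≡ f⁻¹(0) (mod I), n ≥ 1, and a ≡ 0 (mod I), then every τ_I-factorization of a into τ_I-atoms has length exactly n. -/

import Mathlib

open Polynomial
open scoped ENNReal

variable {R : Type*} [CommRing R]

/-- `a = λ b₁ ⋯ b_k` with `λ` a unit, `k ≥ 1`, and all `bᵢ` pairwise congruent mod `I`. -/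
def IsTauFactorization (I : Ideal R) (a : R) (L : List R) : Prop :=
  L ≠ [] ∧ (∃ u : R, IsUnit u ∧ a = u * L.prod) ∧
    ∀ b ∈ L, ∀ c ∈ L, Ideal.Quotient.mk I b = Ideal.Quotient.mk I c

/-- A `τ_I`-atom: a nonzero nonunit whose only `τ_I`-factorizations have length one. -/
def IsTauAtom (I : Ideal R) (a : R) : Prop :=
  a ≠ 0 ∧ ¬ IsUnit a ∧ ∀ L : List R, IsTauFactorization I a L → L.length = 1

/-- A `τ_I`-factorization into `τ_I`-atoms. -/
def IsTauAtomicFactorization (I : Ideal R) (a : R) (L : List R) : Prop :=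
  IsTauFactorization I a L ∧ ∀ b ∈ L, IsTauAtom I b

/-- An element is `τ_I`-atomic if it has a `τ_I`-factorization into `τ_I`-atoms. -/
def IsTauAtomic (I : Ideal R) (a : R) : Prop :=
  ∃ L : List R, IsTauAtomicFactorization I a L

/-- The `τ_I`-elasticity of an element: `sup{k/l}` over pairs of atomic `τ_I`-factorizations. -/
noncomputable def tauElasticity (I : Ideal R) (a : R) : ℝ≥0∞ :=
  sSup {r : ℝ≥0∞ | ∃ L₁ L₂ : List R, IsTauAtomicFactorization I a L₁ ∧
    IsTauAtomicFactorization I a L₂ ∧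
    r = (L₁.length : ℝ≥0∞) / (L₂.length : ℝ≥0∞)}

/-- The `τ_I`-elasticity of the ring: the supremum over `τ_I`-atomic elements. -/
noncomputable def tauRingElasticity (I : Ideal R) : ℝ≥0∞ :=
  ⨆ a ∈ {a : R | IsTauAtomic I a}, tauElasticity I a


open UniqueFactorizationMonoid

section TauAux

variable {R : Type*} [CommRing R] [IsDomain R] [UniqueFactorizationMonoid R] [NormalizationMonoid R]

noncomputable def sigmaI (g : R →+* ZMod 4) (x : R) : ℕ :=
  Multiset.countP (fun p => g p = 0) (normalizedFactors x)

lemma zmod4_mul_ne : ∀ x y : ZMod 4, x ≠ 0 → x ≠ 2 → y ≠ 0 → y ≠ 2 →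
    x * y ≠ 0 ∧ x * y ≠ 2 := by decide

lemma zmod4_prod_ne (s : Multiset (ZMod 4)) (h : ∀ x ∈ s, x ≠ 0 ∧ x ≠ 2) :
    s.prod ≠ 0 ∧ s.prod ≠ 2 := by
  induction s using Multiset.induction with
  | empty => simp; decide
  | cons a s ih =>
      rw [Multiset.prod_cons]
      have ha := h a (Multiset.mem_cons_self a s)
      have hs := ih fun x hx => h x (Multiset.mem_cons_of_mem hx)
      exact zmod4_mul_ne a s.prod ha.1 ha.2 hs.1 hs.2

lemma zmod4_unit_ne {u : ZMod 4} (hu : IsUnit u) : u ≠ 0 ∧ u ≠ 2 := by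
  revert hu; revert u; decide

lemma zmod4_pow_ne {c : ZMod 4} (h0 : c ≠ 0) (h2 : c ≠ 2) (k : ℕ) : c ^ k ≠ 0 := by
  have hc : c = 1 ∨ c = 3 := by revert h0 h2; revert c; decide
  rcases hc with rfl | rfl
  · rw [one_pow]; decide
  · have : ∀ k : ℕ, (3 : ZMod 4) ^ k = 1 ∨ (3 : ZMod 4) ^ k = 3 := by
      intro k
      induction k with
      | zero => left; rfl
      | succ n ih => rw [pow_succ]; rcases ih with h | h <;> rw [h] <;> decide
    rcases this k with h | h <;> rw [h] <;> decide

lemma sigma_mul (g : R →+* ZMod 4) {x y : R} (hx : x ≠ 0) (hy : y ≠ 0) :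
    sigmaI g (x * y) = sigmaI g x + sigmaI g y := by
  unfold sigmaI
  rw [normalizedFactors_mul hx hy, Multiset.countP_add]

lemma sigma_one (g : R →+* ZMod 4) : sigmaI g 1 = 0 := by
  unfold sigmaI
  rw [normalizedFactors_one]
  rfl

lemma sigma_unit (g : R →+* ZMod 4) {u : R} (hu : IsUnit u) : sigmaI g u = 0 := by
  unfold sigmaI
  have hz : normalizedFactors u = 0 := by
    by_contra h
    exact (normalizedFactors_pos u hu.ne_zero).mp (bot_lt_iff_ne_bot.mpr h) hu
  rw [hz]
  rfl

lemma sigma_prime (g : R →+* ZMod 4) {p : R} (hp : Prime p) :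
    sigmaI g p = if g p = 0 then 1 else 0 := by
  unfold sigmaI
  rw [normalizedFactors_irreducible hp.irreducible]
  have hg : g (normalize p) = 0 ↔ g p = 0 := by
    rw [normalize_apply, map_mul]
    exact IsUnit.mul_left_eq_zero ((Units.isUnit _).map g)
  have hsing : ({normalize p} : Multiset R) = normalize p ::ₘ 0 := rfl
  rw [hsing, Multiset.countP_cons, Multiset.countP_zero, zero_add]
  by_cases h : g p = 0
  · rw [if_pos h, if_pos (hg.mpr h)]
  · rw [if_neg h, if_neg (fun hc => h (hg.mp hc))]

lemma sigma_list_prod (g : R →+* ZMod 4) (L : List R) (h : ∀ x ∈ L, x ≠ 0) :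
    sigmaI g L.prod = (L.map (sigmaI g)).sum := by
  induction L with
  | nil => simpa using sigma_one g
  | cons a t ih =>
      have ha := h a (List.mem_cons_self)
      have ht : ∀ x ∈ t, x ≠ 0 := fun x hx => h x (List.mem_cons_of_mem a hx)
      have htp : t.prod ≠ 0 := by
        intro hc
        exact ht 0 (List.prod_eq_zero_iff.mp hc) rfl
      rw [List.prod_cons, sigma_mul g ha htp, List.map_cons, List.sum_cons, ih ht]

lemma exists_unit_eq (b : R) (hb : b ≠ 0) :
    ∃ u : R, IsUnit u ∧ b = u * (normalizedFactors b).prod := by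
  obtain ⟨v, hv⟩ := prod_normalizedFactors hb
  refine ⟨↑v, v.isUnit, ?_⟩
  rw [mul_comm]
  exact hv.symm

lemma zmod4_prod_two (s : Multiset (ZMod 4)) (h : ∀ x ∈ s, x = 2) :
    s.prod = 2 ^ Multiset.card s := by
  induction s using Multiset.induction with
  | empty => simp
  | cons a s ih =>
      rw [Multiset.prod_cons, Multiset.card_cons, pow_succ,
        h a (Multiset.mem_cons_self a s), ih fun x hx => h x (Multiset.mem_cons_of_mem hx)]
      ring

/-- Key lemma: a `τ_I`-atom lying in `I` has exactly one prime factor in `I`. -/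
lemma atom_sigma_one (I : Ideal R) (g : R →+* ZMod 4)
    (hgI : ∀ x : R, g x = 0 ↔ x ∈ I) {b : R} (hb : IsTauAtom I b) (hb0 : g b = 0) :
    sigmaI g b = 1 := by
  obtain ⟨hbne, hbnu, hlen⟩ := hb
  have hcong : ∀ x y : R, g x = g y → Ideal.Quotient.mk I x = Ideal.Quotient.mk I y := by
    intro x y h
    rw [Ideal.Quotient.mk_eq_mk_iff_sub_mem, ← hgI, map_sub, h, sub_self]
  obtain ⟨u, hu, hbu⟩ := exists_unit_eq b hbne
  set F := normalizedFactors b with hF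
  have hFprod : g F.prod = (F.map g).prod := map_multiset_prod g F
  -- upper bound
  have hle : sigmaI g b ≤ 1 := by
    by_contra hcon
    push_neg at hcon
    have h2 : 2 ≤ Multiset.countP (fun p => g p = 0) F := hcon
    have hpos : 0 < Multiset.countP (fun p => g p = 0) F := by omega
    obtain ⟨s, hsF, hs0⟩ := Multiset.countP_pos.mp hpos
    obtain ⟨F', hF'⟩ := Multiset.exists_cons_of_mem hsF
    rw [hF', Multiset.countP_cons, if_pos hs0] at h2
    have hpos' : 0 < Multiset.countP (fun p => g p = 0) F' := by omega
    obtain ⟨s', hs'F, hs'0⟩ := Multiset.countP_pos.mp hpos'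
    obtain ⟨F'', hF''⟩ := Multiset.exists_cons_of_mem hs'F
    have hfac : IsTauFactorization I b [u * F'.prod, s] := by
      refine ⟨by simp, ⟨1, isUnit_one, ?_⟩, ?_⟩
      · rw [hbu, hF', Multiset.prod_cons]; simp; ring
      · have hval : ∀ x ∈ [u * F'.prod, s], g x = 0 := by
          intro x hx
          simp only [List.mem_cons, List.not_mem_nil, or_false] at hx
          rcases hx with rfl | rfl
          · rw [map_mul, hF'', Multiset.prod_cons, map_mul, hs'0]
            ring
          · exact hs0
        intro x hx y hy
        exact hcong x y ((hval x hx).trans (hval y hy).symm)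
    have := hlen _ hfac
    simp at this
  -- lower bound
  have hge : 1 ≤ sigmaI g b := by
    by_contra hcon
    push_neg at hcon
    have h0 : Multiset.countP (fun p => g p = 0) F = 0 := by
      have : sigmaI g b = Multiset.countP (fun p => g p = 0) F := rfl
      omega
    have hnone : ∀ p ∈ F, ¬ g p = 0 := Multiset.countP_eq_zero.mp h0
    set T := F.filter (fun p => g p = 2) with hT
    set U := F.filter (fun p => ¬ g p = 2) with hU
    have hTU : T + U = F := Multiset.filter_add_not _ F
    have hUval : ∀ x ∈ U, g x ≠ 0 ∧ g x ≠ 2 := by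
      intro x hx
      rw [hU, Multiset.mem_filter] at hx
      exact ⟨hnone x hx.1, hx.2⟩
    have hTval : ∀ x ∈ T, g x = 2 := by
      intro x hx
      rw [hT, Multiset.mem_filter] at hx
      exact hx.2
    have hw : (U.map g).prod ≠ 0 ∧ (U.map g).prod ≠ 2 := by
      apply zmod4_prod_ne
      intro x hx
      obtain ⟨y, hy, rfl⟩ := Multiset.mem_map.mp hx
      exact hUval y hy
    have hv : g u ≠ 0 ∧ g u ≠ 2 := zmod4_unit_ne (hu.map g)
    have hTprod : (T.map g).prod = 2 ^ Multiset.card T := by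
      rw [zmod4_prod_two]
      · rw [Multiset.card_map]
      · intro x hx
        obtain ⟨y, hy, rfl⟩ := Multiset.mem_map.mp hx
        exact hTval y hy
    have hgb : g u * (2 ^ Multiset.card T * (U.map g).prod) = 0 := by
      rw [← hTprod, ← Multiset.prod_add, ← Multiset.map_add, hTU, ← map_multiset_prod,
        ← map_mul, ← hbu, hb0]
    have hcard : 2 ≤ Multiset.card T := by
      by_contra hc
      push_neg at hc
      interval_cases h : Multiset.card T
      · rw [pow_zero, one_mul] at hgb
        exact (zmod4_mul_ne _ _ hv.1 hv.2 hw.1 hw.2).1 hgb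
      · rw [pow_one] at hgb
        have hall : ∀ v w : ZMod 4, v ≠ 0 → v ≠ 2 → w ≠ 0 → w ≠ 2 →
            v * (2 * w) ≠ 0 := by decide
        exact hall _ _ hv.1 hv.2 hw.1 hw.2 hgb
    -- build a length-≥2 factorization with all classes 2
    set Tl := T.toList with hTl
    have hTlen : Tl.length = Multiset.card T := Multiset.length_toList T
    obtain ⟨t, Tt, hTt⟩ : ∃ t Tt, Tl = t :: Tt := by
      cases h : Tl with
      | nil => rw [h] at hTlen; simp at hTlen; omega
      | cons t Tt => exact ⟨t, Tt, rfl⟩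
    have hfac : IsTauFactorization I b ((u * U.prod * t) :: Tt) := by
      refine ⟨by simp, ⟨1, isUnit_one, ?_⟩, ?_⟩
      · have : T.prod = t * Tt.prod := by
          rw [← Multiset.prod_toList, ← hTl, hTt, List.prod_cons]
        rw [hbu, ← hTU, Multiset.prod_add, this]
        simp; ring
      · have hval : ∀ x ∈ (u * U.prod * t) :: Tt, g x = 2 := by
          intro x hx
          rcases List.mem_cons.mp hx with rfl | hx'
          · rw [map_mul, map_mul, map_multiset_prod]
            have htT : t ∈ T := by
              rw [← Multiset.mem_toList, ← hTl, hTt]; exact List.mem_cons_self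
            rw [hTval t htT]
            have hall : ∀ v w : ZMod 4, v ≠ 0 → v ≠ 2 → w ≠ 0 → w ≠ 2 →
                v * w * 2 = 2 := by decide
            exact hall _ _ hv.1 hv.2 hw.1 hw.2
          · apply hTval
            rw [← Multiset.mem_toList, ← hTl, hTt]
            exact List.mem_cons_of_mem t hx'
        intro x hx y hy
        exact hcong x y ((hval x hx).trans (hval y hy).symm)
    have := hlen _ hfac
    simp at this
    rw [this] at hTt
    rw [hTt] at hTlen
    simp at hTlen
    omega
  omega

lemma list_sum_eq_length (l : List ℕ) (h : ∀ x ∈ l, x = 1) : l.sum = l.length := by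
  induction l with
  | nil => rfl
  | cons a t ih =>
      rw [List.sum_cons, List.length_cons, h a (List.mem_cons_self),
        ih fun x hx => h x (List.mem_cons_of_mem a hx)]
      omega

end TauAux

/-- UFD `R`, `R/I ≅ ℤ/4ℤ` via `f`: if `a` is a product of primes with the indicated
congruence classes, at least one prime lies in `I`, and `a ∈ I`, then every
`τ_I`-factorization of `a` into `τ_I`-atoms has length exactly `n = S.length`. -/
theorem stmt_9 {R : Type*} [CommRing R] [IsDomain R] [UniqueFactorizationMonoid R]
    (I : Ideal R) (f : (R ⧸ I) ≃+* ZMod 4) (a : R) (P Q M S : List R)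
    (hP : ∀ p ∈ P, Prime p ∧ f (Ideal.Quotient.mk I p) = 1)
    (hQ : ∀ q ∈ Q, Prime q ∧ f (Ideal.Quotient.mk I q) = 2)
    (hM : ∀ r ∈ M, Prime r ∧ f (Ideal.Quotient.mk I r) = 3)
    (hS : ∀ s ∈ S, Prime s ∧ f (Ideal.Quotient.mk I s) = 0)
    (ha : a = P.prod * Q.prod * M.prod * S.prod)
    (hn : 1 ≤ S.length) (haI : a ∈ I) :
    ∀ L : List R, IsTauAtomicFactorization I a L → L.length = S.length := by
  classical
  letI : NormalizationMonoid R := UniqueFactorizationMonoid.normalizationMonoid.toNormalizationMonoid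
  set g : R →+* ZMod 4 := f.toRingHom.comp (Ideal.Quotient.mk I) with hgdef
  have hgx : ∀ x : R, g x = f (Ideal.Quotient.mk I x) := fun x => rfl
  have hgI : ∀ x : R, g x = 0 ↔ x ∈ I := by
    intro x
    rw [hgx, ← Ideal.Quotient.eq_zero_iff_mem]
    constructor
    · intro h
      apply f.injective
      rw [h, map_zero]
    · intro h
      rw [h, map_zero]
  have prodPrime : ∀ (Lst : List R), (∀ p ∈ Lst, Prime p) → Lst.prod ≠ 0 := by
    intro Lst hpr hc
    exact ((hpr 0 (List.prod_eq_zero_iff.mp hc)).ne_zero) rfl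
  have key : ∀ (Lst : List R) (v : ZMod 4),
      (∀ p ∈ Lst, Prime p ∧ f (Ideal.Quotient.mk I p) = v) →
      sigmaI g Lst.prod = if v = 0 then Lst.length else 0 := by
    intro Lst v h
    induction Lst with
    | nil =>
        rw [List.prod_nil, sigma_one]
        by_cases hv : v = 0 <;> simp [hv]
    | cons p t ih =>
        have hp := h p (List.mem_cons_self)
        have ht : ∀ x ∈ t, Prime x ∧ f (Ideal.Quotient.mk I x) = v :=
          fun x hx => h x (List.mem_cons_of_mem p hx)
        have htp : t.prod ≠ 0 := prodPrime t fun x hx => (ht x hx).1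
        rw [List.prod_cons, sigma_mul g hp.1.ne_zero htp, sigma_prime g hp.1,
          ih ht, List.length_cons]
        have hgp : g p = v := by rw [hgx]; exact hp.2
        by_cases hv : v = 0
        · rw [if_pos (by rw [hgp, hv]), if_pos hv, if_pos hv]; omega
        · rw [if_neg (by rw [hgp]; exact hv), if_neg hv, if_neg hv]
  have hPQMne : P.prod * Q.prod * M.prod ≠ 0 := by
    have h1 := prodPrime P fun x hx => (hP x hx).1
    have h2 := prodPrime Q fun x hx => (hQ x hx).1
    have h3 := prodPrime M fun x hx => (hM x hx).1
    exact mul_ne_zero (mul_ne_zero h1 h2) h3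
  have hsa : sigmaI g a = S.length := by
    have h1 := prodPrime P fun x hx => (hP x hx).1
    have h2 := prodPrime Q fun x hx => (hQ x hx).1
    have h3 := prodPrime M fun x hx => (hM x hx).1
    have h4 := prodPrime S fun x hx => (hS x hx).1
    rw [ha, sigma_mul g hPQMne h4, sigma_mul g (mul_ne_zero h1 h2) h3,
      sigma_mul g h1 h2, key P 1 hP, key Q 2 hQ, key M 3 hM, key S 0 hS,
      if_neg (by decide : ¬ (1 : ZMod 4) = 0), if_neg (by decide : ¬ (2 : ZMod 4) = 0),
      if_neg (by decide : ¬ (3 : ZMod 4) = 0), if_pos rfl]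
    omega
  intro L hL
  obtain ⟨⟨hLne, ⟨u, hu, hprod⟩, hcong⟩, hatoms⟩ := hL
  obtain ⟨b₀, hb₀⟩ := List.exists_mem_of_ne_nil L hLne
  set c := g b₀ with hc
  have hcL : ∀ b ∈ L, g b = c := by
    intro b hb
    rw [hgx, hc, hgx]
    exact congrArg f (hcong b hb b₀ hb₀)
  have hga : g a = 0 := (hgI a).mpr haI
  have hck : c ^ L.length = 0 := by
    have h1 : g a = g u * c ^ L.length := by
      rw [hprod, map_mul, map_list_prod,
        List.prod_eq_pow_card (L.map g) c (by
          intro x hx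
          obtain ⟨y, hy, rfl⟩ := List.mem_map.mp hx
          exact hcL y hy), List.length_map]
    rw [h1] at hga
    exact ((hu.map g).mul_right_eq_zero).mp hga
  have hc02 : c = 0 ∨ c = 2 := by
    by_contra hcc
    push_neg at hcc
    exact zmod4_pow_ne hcc.1 hcc.2 L.length hck
  rcases hc02 with hc0 | hc2
  · -- all factors lie in I; each atom has exactly one prime factor in I
    have hb1 : ∀ b ∈ L, sigmaI g b = 1 := fun b hb =>
      atom_sigma_one I g hgI (hatoms b hb) ((hcL b hb).trans hc0)
    have hbne : ∀ b ∈ L, b ≠ 0 := fun b hb => (hatoms b hb).1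
    have hLprodne : L.prod ≠ 0 := fun hcz => hbne 0 (List.prod_eq_zero_iff.mp hcz) rfl
    have hcount : sigmaI g a = L.length := by
      rw [hprod, sigma_mul g hu.ne_zero hLprodne, sigma_unit g hu,
        sigma_list_prod g L hbne, zero_add, list_sum_eq_length, List.length_map]
      intro x hx
      obtain ⟨y, hy, rfl⟩ := List.mem_map.mp hx
      exact hb1 y hy
    omega
  · -- impossible: the class-2 case conflicts with a prime of `S` dividing `a`
    exfalso
    have hSne : S ≠ [] := by
      intro h
      rw [h] at hn
      simp at hn
    obtain ⟨s, hs⟩ := List.exists_mem_of_ne_nil S hSne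
    have hsp := hS s hs
    have hdvd : s ∣ a := by
      rw [ha]
      exact Dvd.dvd.mul_left (List.dvd_prod hs) _
    rw [hprod] at hdvd
    rcases hsp.1.dvd_or_dvd hdvd with h | h
    · exact hsp.1.not_unit (isUnit_of_dvd_unit h hu)
    · obtain ⟨b, hbL, hsb⟩ := (Prime.dvd_prod_iff hsp.1).mp h
      obtain ⟨t, rfl⟩ := hsb
      have hz : g (s * t) = 0 := by
        rw [map_mul, hgx s, hsp.2, zero_mul]
      have h20 : (2 : ZMod 4) = 0 := by
        rw [← hc2, ← hcL _ hbL]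
        exact hz
      exact absurd h20 (by decide)
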